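/- Let A be a unital C*-algebra and let p ∈ A satisfy 0 ≤ p ≤ 1. Then p is a projection if and only if the only positive element a ∈ A with a ≤ p and a ≤ 1 − p is a = 0. -/

import Mathlib

/-- For `0 ≤ p ≤ 1` in a unital C*-algebra, `p` is a projection if and only if
the only positive element `a` with `a ≤ p` and `a ≤ 1 - p` is `a = 0`. -/
theorem stmt_5 {A : Type*} [CStarAlgebra A] [PartialOrder A] [StarOrderedRing A]
    (p : A) (h0 : 0 ≤ p) (h1 : p ≤ 1) :
    (IsSelfAdjoint p ∧ IsIdempotentElem p) ↔
      ∀ a : A, 0 ≤ a → a ≤ p → a ≤ 1 - p → a = 0 := by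
  constructor
  · rintro ⟨hsa, hip⟩ a ha hap ha1p
    set b := CFC.sqrt a with hb
    have hbnn : 0 ≤ b := CFC.sqrt_nonneg a
    have hbb : b * b = a := CFC.sqrt_mul_sqrt_self a ha
    have hbsa : star b = b := (IsSelfAdjoint.of_nonneg hbnn)
    -- p a p ≤ p (1-p) p = 0
    have h1 : star p * a * p ≤ star p * (1 - p) * p := star_left_conjugate_le_conjugate ha1p p
    have hpsa : star p = p := hsa
    rw [hpsa] at h1
    have hz1 : p * (1 - p) * p = 0 := by
      simp [mul_sub, sub_mul, hip.eq]
    rw [hz1] at h1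
    have hpap : p * a * p = 0 := le_antisymm h1 (by
      have := star_left_conjugate_nonneg ha p
      rwa [hpsa] at this)
    -- hence b * p = 0
    have hbp : b * p = 0 := by
      have : star (b * p) * (b * p) = 0 := by
        rw [star_mul, hpsa, hbsa]
        calc p * b * (b * p) = p * (b * b) * p := by noncomm_ring
        _ = p * a * p := by rw [hbb]
        _ = 0 := hpap
      exact (CStarRing.star_mul_self_eq_zero_iff _).mp this
    -- (1-p) a (1-p) ≤ 0
    have h2 : star (1 - p) * a * (1 - p) ≤ star (1 - p) * p * (1 - p) :=
      star_left_conjugate_le_conjugate hap (1 - p)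
    have hq : star (1 - p) = 1 - p := by simp [hpsa, star_sub]
    rw [hq] at h2
    have : (1 - p) * p * (1 - p) = 0 := by
      have : (1 - p) * p = p - p * p := by noncomm_ring
      rw [this, hip.eq, sub_self, zero_mul]
    rw [this] at h2
    have hqaq : (1 - p) * a * (1 - p) = 0 := le_antisymm h2 (by
      have := star_left_conjugate_nonneg ha (1 - p)
      rwa [hq] at this)
    have hbq : b * (1 - p) = 0 := by
      have : star (b * (1 - p)) * (b * (1 - p)) = 0 := by
        rw [star_mul, hq, hbsa]
        calc (1 - p) * b * (b * (1 - p)) = (1 - p) * (b * b) * (1 - p) := by noncomm_ring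
        _ = (1 - p) * a * (1 - p) := by rw [hbb]
        _ = 0 := hqaq
      exact (CStarRing.star_mul_self_eq_zero_iff _).mp this
    have hb0 : b = 0 := by
      have : b * 1 = 0 := by
        have := hbp
        calc b * 1 = b * p + b * (1 - p) := by noncomm_ring
        _ = 0 := by rw [hbp, hbq, add_zero]
      simpa using this
    rw [← hbb, hb0, mul_zero]
  · intro h
    have hsa : IsSelfAdjoint p := IsSelfAdjoint.of_nonneg h0
    refine ⟨hsa, ?_⟩
    have key := h (p - p * p) ?_ ?_ ?_
    · exact (sub_eq_zero.mp key).symm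
    · set s := CFC.sqrt p with hs
      have hss : s * s = p := CFC.sqrt_mul_sqrt_self p h0
      have hssa : star s = s := IsSelfAdjoint.of_nonneg (CFC.sqrt_nonneg p)
      have := star_left_conjugate_nonneg (sub_nonneg.mpr h1) s
      rw [hssa] at this
      have heq : s * (1 - p) * s = p - p * p := by
        rw [← hss]; noncomm_ring
      rwa [heq] at this
    · rw [← sub_nonneg]
      have : p - (p - p * p) = star p * p := by rw [hsa.star_eq]; noncomm_ring
      rw [this]
      exact star_mul_self_nonneg p
    · rw [← sub_nonneg]
      have : 1 - p - (p - p * p) = star (1 - p) * (1 - p) := by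
        rw [star_sub, star_one, hsa.star_eq]
        noncomm_ring
      rw [this]
      exact star_mul_self_nonneg (1 - p)
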